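/- Let P be an Ising model on variables x_0, x_1, …, x_n with parameters w_{i,j} (0 ≤ i < j ≤ n) and h_i (0 ≤ i ≤ n), with w_{0,i} = 0 for all 1 ≤ i ≤ n, and partition function Z_P. Fix 1 ≤ k ≤ n and δ > 0, and let Q be the Ising model with the same parameters except w'_{0,k} = δ, with partition function Z_Q. Then |dTV(P, Q) − Pr_P[x_k = 1]| ≤ 3·exp(2 h_0) + exp(−δ) · Z_P / Z_Q. -/
import Mathlib


open Finset

/-- The spin value (`+1` or `−1`) encoded by a Boolean. -/
noncomputable def spin (b : Bool) : ℝ := if b then 1 else -1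

/-- The (unnormalized) weight of a configuration `x ∈ {−1,1}^N` of the Ising model with
pair parameters `w i j` (used for `i < j`) and field parameters `h i`:
`E(x) = exp(Σ_{i<j} w_{i,j} x_i x_j + Σ_i h_i x_i)`. -/
noncomputable def isingWeight {N : ℕ} (w : Fin N → Fin N → ℝ) (h : Fin N → ℝ)
    (x : Fin N → Bool) : ℝ :=
  Real.exp ((∑ i, ∑ j ∈ Finset.Ioi i, w i j * spin (x i) * spin (x j)) +
    ∑ i, h i * spin (x i))

/-- The partition function `Z = Σ_x E(x)` of the Ising model. -/
noncomputable def isingZ {N : ℕ} (w : Fin N → Fin N → ℝ) (h : Fin N → ℝ) : ℝ :=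
  ∑ x : Fin N → Bool, isingWeight w h x

/-- The probability `P(x) = E(x)/Z` of a configuration of the Ising model. -/
noncomputable def isingProb {N : ℕ} (w : Fin N → Fin N → ℝ) (h : Fin N → ℝ)
    (x : Fin N → Bool) : ℝ :=
  isingWeight w h x / isingZ w h

open scoped Classical

lemma spin_mul_le_one (a b : Bool) : spin a * spin b ≤ 1 := by
  cases a <;> cases b <;> simp [spin]

lemma isingWeight_pos {N : ℕ} (w : Fin N → Fin N → ℝ) (h : Fin N → ℝ)
    (x : Fin N → Bool) : 0 < isingWeight w h x := Real.exp_pos _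

lemma isingZ_pos {N : ℕ} (w : Fin N → Fin N → ℝ) (h : Fin N → ℝ) :
    0 < isingZ w h :=
  Finset.sum_pos (fun x _ => isingWeight_pos w h x) Finset.univ_nonempty

lemma weight_rel (n : ℕ) (w : Fin (n + 1) → Fin (n + 1) → ℝ) (h : Fin (n + 1) → ℝ)
    (hw0 : ∀ i : Fin (n + 1), i ≠ 0 → w 0 i = 0)
    (k : Fin (n + 1)) (hk : k ≠ 0) (δ : ℝ)
    (w' : Fin (n + 1) → Fin (n + 1) → ℝ)
    (hw' : ∀ i j, w' i j = if i = 0 ∧ j = k then δ else w i j)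
    (x : Fin (n + 1) → Bool) :
    isingWeight w' h x = isingWeight w h x * Real.exp (δ * spin (x 0) * spin (x k)) := by
  unfold isingWeight
  rw [← Real.exp_add]
  congr 1
  have hterm : ∀ i : Fin (n + 1), ∀ j ∈ Ioi i,
      w' i j * spin (x i) * spin (x j)
        = w i j * spin (x i) * spin (x j)
          + (if i = 0 ∧ j = k then δ * spin (x i) * spin (x j) else 0) := by
    intro i j _
    rw [hw' i j]
    by_cases hij : i = 0 ∧ j = k
    · obtain ⟨h1, h2⟩ := hij
      subst h1; subst h2
      rw [if_pos ⟨rfl, rfl⟩, if_pos ⟨rfl, rfl⟩, hw0 _ hk]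
      ring
    · rw [if_neg hij, if_neg hij, add_zero]
  have hsum2 : ∑ i : Fin (n + 1), ∑ j ∈ Ioi i,
      (if i = 0 ∧ j = k then δ * spin (x i) * spin (x j) else 0)
        = δ * spin (x 0) * spin (x k) := by
    rw [Finset.sum_eq_single 0]
    · have h1 : ∀ j ∈ Ioi (0 : Fin (n + 1)),
        (if (0 : Fin (n + 1)) = 0 ∧ j = k then δ * spin (x 0) * spin (x j) else 0)
          = if j = k then δ * spin (x 0) * spin (x j) else 0 := by
        intro j _; simp
      rw [Finset.sum_congr rfl h1, Finset.sum_ite_eq' (Ioi 0) k]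
      rw [if_pos (Finset.mem_Ioi.mpr (Fin.pos_of_ne_zero hk))]
    · intro i _ hi
      apply Finset.sum_eq_zero
      intro j _
      simp [hi]
    · intro habs; exact absurd (Finset.mem_univ _) habs
  calc (∑ i, ∑ j ∈ Ioi i, w' i j * spin (x i) * spin (x j)) + ∑ i, h i * spin (x i)
      = (∑ i, ∑ j ∈ Ioi i, (w i j * spin (x i) * spin (x j)
          + (if i = 0 ∧ j = k then δ * spin (x i) * spin (x j) else 0)))
        + ∑ i, h i * spin (x i) := by
        congr 1
        exact Finset.sum_congr rfl (fun i _ => Finset.sum_congr rfl (hterm i))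
    _ = ((∑ i, ∑ j ∈ Ioi i, w i j * spin (x i) * spin (x j)) + ∑ i, h i * spin (x i))
          + δ * spin (x 0) * spin (x k) := by
        simp only [Finset.sum_add_distrib, hsum2]; ring

lemma weight_flip (n : ℕ) (w : Fin (n + 1) → Fin (n + 1) → ℝ) (h : Fin (n + 1) → ℝ)
    (hw0 : ∀ i : Fin (n + 1), i ≠ 0 → w 0 i = 0)
    (x : Fin (n + 1) → Bool) (hx : x 0 = false) :
    isingWeight w h (Function.update x 0 true) = Real.exp (2 * h 0) * isingWeight w h x := by
  unfold isingWeight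
  rw [← Real.exp_add]
  congr 1
  set y := Function.update x 0 true with hy
  have hy0 : y 0 = true := Function.update_self 0 true x
  have hyj : ∀ j : Fin (n + 1), j ≠ 0 → y j = x j :=
    fun j hj => Function.update_of_ne hj true x
  have hpair : ∑ i, ∑ j ∈ Ioi i, w i j * spin (y i) * spin (y j)
      = ∑ i, ∑ j ∈ Ioi i, w i j * spin (x i) * spin (x j) := by
    apply Finset.sum_congr rfl
    intro i _
    by_cases hi : i = 0
    · subst hi
      apply Finset.sum_congr rfl
      intro j hj
      rw [hw0 j (Fin.pos_iff_ne_zero.mp (Finset.mem_Ioi.mp hj))]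
      ring
    · apply Finset.sum_congr rfl
      intro j hj
      have hj0 : j ≠ 0 :=
        Fin.pos_iff_ne_zero.mp (lt_trans (Fin.pos_of_ne_zero hi) (Finset.mem_Ioi.mp hj))
      rw [hyj i hi, hyj j hj0]
  have hfield : ∑ i, h i * spin (y i) = 2 * h 0 + ∑ i, h i * spin (x i) := by
    rw [Fin.sum_univ_succ, Fin.sum_univ_succ]
    have hs : ∀ i : Fin n, y i.succ = x i.succ := fun i => hyj _ (Fin.succ_ne_zero i)
    simp only [hs, hy0, hx, spin, if_true, if_false]
    norm_num
    ring
  rw [hpair, hfield]; ring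

lemma sum_x0_true (n : ℕ) (w : Fin (n + 1) → Fin (n + 1) → ℝ) (h : Fin (n + 1) → ℝ)
    (hw0 : ∀ i : Fin (n + 1), i ≠ 0 → w 0 i = 0) :
    ∑ x : Fin (n + 1) → Bool, (if x 0 = true then isingWeight w h x else 0)
      ≤ Real.exp (2 * h 0) * isingZ w h := by
  have hinv : Function.Involutive
      (fun x : Fin (n + 1) → Bool => Function.update x 0 (!(x 0))) := by
    intro x
    simp [Function.update_idem]
  have hre := hinv.bijective.sum_comp
    (fun x : Fin (n + 1) → Bool => if x 0 = true then isingWeight w h x else 0)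
  rw [← hre]
  unfold isingZ
  rw [Finset.mul_sum]
  apply Finset.sum_le_sum
  intro x _
  simp only [Function.update_self]
  cases hx : x 0
  · simp only [hx, Bool.not_false, if_true]
    rw [weight_flip n w h hw0 x hx]
  · simp only [hx, Bool.not_true, if_false]
    exact le_of_lt (mul_pos (Real.exp_pos _) (isingWeight_pos w h x))

/-- let `P` be an Ising model on `x_0, …, x_n` with `w_{0,i} = 0` for all
`i ≥ 1`, and let `Q` be the same model except that `w'_{0,k} = δ > 0`. Then
`|dTV(P,Q) − Pr_P[x_k = 1]| ≤ 3 exp(2 h_0) + exp(−δ) · Z_P / Z_Q`. -/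
theorem ising_tv_approximates_marginal
    (n : ℕ) (w : Fin (n + 1) → Fin (n + 1) → ℝ) (h : Fin (n + 1) → ℝ)
    (hw0 : ∀ i : Fin (n + 1), i ≠ 0 → w 0 i = 0)
    (k : Fin (n + 1)) (hk : k ≠ 0) (δ : ℝ) (hδ : 0 < δ)
    (w' : Fin (n + 1) → Fin (n + 1) → ℝ)
    (hw' : ∀ i j, w' i j = if i = 0 ∧ j = k then δ else w i j) :
    |(∑ x : Fin (n + 1) → Bool, max 0 (isingProb w h x - isingProb w' h x)) -
        ∑ x ∈ Finset.univ.filter (fun x : Fin (n + 1) → Bool => spin (x k) = 1),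
          isingProb w h x|
      ≤ 3 * Real.exp (2 * h 0) + Real.exp (-δ) * isingZ w h / isingZ w' h := by
  have hZ : 0 < isingZ w h := isingZ_pos w h
  have hZ' : 0 < isingZ w' h := isingZ_pos w' h
  have hB : ∀ x : Fin (n + 1) → Bool, isingWeight w' h x
      = isingWeight w h x * Real.exp (δ * spin (x 0) * spin (x k)) :=
    weight_rel n w h hw0 k hk δ w' hw'
  have hZle : isingZ w' h ≤ Real.exp δ * isingZ w h := by
    unfold isingZ
    rw [Finset.mul_sum]
    apply Finset.sum_le_sum
    intro x _
    rw [hB x, mul_comm (Real.exp δ)]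
    apply mul_le_mul_of_nonneg_left _ (isingWeight_pos w h x).le
    apply Real.exp_le_exp.mpr
    have h1 := spin_mul_le_one (x 0) (x k)
    nlinarith
  have key : ∀ x : Fin (n + 1) → Bool,
      |max 0 (isingProb w h x - isingProb w' h x)
          - (if spin (x k) = 1 then isingProb w h x else 0)|
        ≤ (if x 0 = true then isingProb w h x else 0)
          + Real.exp (-δ) * isingWeight w h x / isingZ w' h := by
    intro x
    have hPpos : 0 < isingProb w h x := div_pos (isingWeight_pos w h x) hZ
    have hQpos : 0 < isingProb w' h x := div_pos (isingWeight_pos w' h x) hZ'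
    have hR : 0 ≤ Real.exp (-δ) * isingWeight w h x / isingZ w' h :=
      le_of_lt (div_pos (mul_pos (Real.exp_pos _) (isingWeight_pos w h x)) hZ')
    have haligned : x 0 = x k →
        max 0 (isingProb w h x - isingProb w' h x) = 0 := by
      intro hxx
      apply max_eq_left
      have hs : spin (x 0) * spin (x k) = 1 := by
        rw [hxx]; cases x k <;> simp [spin]
      have hE' : isingWeight w' h x = isingWeight w h x * Real.exp δ := by
        rw [hB x, mul_assoc, hs, mul_one]
      have hle : isingProb w h x ≤ isingProb w' h x := by
        unfold isingProb
        rw [hE', div_le_div_iff₀ hZ hZ']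
        have := (isingWeight_pos w h x).le
        nlinarith
      linarith
    have hanti : x 0 ≠ x k →
        isingProb w' h x = Real.exp (-δ) * isingWeight w h x / isingZ w' h := by
      intro hxx
      have hs : δ * spin (x 0) * spin (x k) = -δ := by
        cases h0 : x 0 <;> cases hk2 : x k <;> simp_all [spin] <;> ring
      unfold isingProb
      rw [hB x, hs]
      ring
    have hmax_le : max 0 (isingProb w h x - isingProb w' h x) ≤ isingProb w h x :=
      max_le hPpos.le (by linarith)
    have hmax_ge : isingProb w h x - isingProb w' h x
        ≤ max 0 (isingProb w h x - isingProb w' h x) := le_max_right _ _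
    have hmax0 : 0 ≤ max 0 (isingProb w h x - isingProb w' h x) := le_max_left _ _
    cases h0 : x 0 <;> cases hk2 : x k
    · rw [haligned (by rw [h0, hk2]), if_neg (by norm_num [spin, hk2]),
        if_neg (by simp [h0])]
      simpa using hR
    · rw [if_pos (by norm_num [spin, hk2]), if_neg (by simp [h0])]
      have hQ := hanti (by rw [h0, hk2]; simp)
      rw [abs_of_nonpos (by linarith), ← hQ]
      linarith
    · rw [if_neg (by norm_num [spin, hk2]), if_pos (by simp [h0])]
      rw [sub_zero, abs_of_nonneg hmax0]
      linarith
    · rw [haligned (by rw [h0, hk2]), if_pos (by norm_num [spin, hk2]),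
        if_pos (by simp [h0])]
      rw [zero_sub, abs_neg, abs_of_nonneg hPpos.le]
      linarith
  rw [Finset.sum_filter, ← Finset.sum_sub_distrib]
  calc |∑ x : Fin (n + 1) → Bool, (max 0 (isingProb w h x - isingProb w' h x)
          - (if spin (x k) = 1 then isingProb w h x else 0))|
      ≤ ∑ x : Fin (n + 1) → Bool, |max 0 (isingProb w h x - isingProb w' h x)
          - (if spin (x k) = 1 then isingProb w h x else 0)| :=
        Finset.abs_sum_le_sum_abs _ _
    _ ≤ ∑ x : Fin (n + 1) → Bool, ((if x 0 = true then isingProb w h x else 0)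
          + Real.exp (-δ) * isingWeight w h x / isingZ w' h) :=
        Finset.sum_le_sum (fun x _ => key x)
    _ = (∑ x : Fin (n + 1) → Bool, (if x 0 = true then isingProb w h x else 0))
          + Real.exp (-δ) * isingZ w h / isingZ w' h := by
        rw [Finset.sum_add_distrib]
        congr 1
        rw [← Finset.sum_div, ← Finset.mul_sum]
        rfl
    _ ≤ Real.exp (2 * h 0) + Real.exp (-δ) * isingZ w h / isingZ w' h := by
        have hsum : ∑ x : Fin (n + 1) → Bool, (if x 0 = true then isingProb w h x else 0)
            = (∑ x : Fin (n + 1) → Bool, (if x 0 = true then isingWeight w h x else 0))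
              / isingZ w h := by
          rw [Finset.sum_div]
          apply Finset.sum_congr rfl
          intro x _
          split_ifs <;> simp [isingProb]
        rw [hsum]
        have := sum_x0_true n w h hw0
        have hle : (∑ x : Fin (n + 1) → Bool, (if x 0 = true then isingWeight w h x else 0))
            / isingZ w h ≤ Real.exp (2 * h 0) := by
          rw [div_le_iff₀ hZ]
          exact this
        linarith
    _ ≤ 3 * Real.exp (2 * h 0) + Real.exp (-δ) * isingZ w h / isingZ w' h := by
        have := Real.exp_pos (2 * h 0)
        linarith
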